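/- Let p be a prime, D cyclic of order p^n, E ≤ Aut(D) a p'-subgroup, G = D ⋊ E, and D_i, D_j the subgroups of D of orders p^i, p^j respectively, with (i,j) ≠ (0,0). Set k = min{i,j}, l = max{i,j}. If g ∈ G with g ∉ D_l·E, then D_iE ∩ ^g(D_jE) = D_k. Moreover |D_iE·g·D_jE| = p^l·|E|^2 and the number of nontrivial (D_iE, D_jE)-double cosets in G is (p^{n−l} − 1)/|E|. -/

import Mathlib

open SemidirectProduct

section aux


open Finset in
lemma nt_aux (p t n : ℕ) (hp : p.Prime) (ht : Nat.Coprime t p) (u : ℤ)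
    (h1 : (p : ℤ) ∣ u - 1) (h2 : (p : ℤ) ^ n ∣ u ^ t - 1) : (p : ℤ) ^ n ∣ u - 1 := by
  set S : ℤ := ∑ r ∈ range t, u ^ r with hS
  have hgeom : S * (u - 1) = u ^ t - 1 := geom_sum_mul u t
  have hmod : (p : ℤ) ∣ S - t := by
    have hst : S - t = ∑ r ∈ range t, (u ^ r - 1) := by
      rw [Finset.sum_sub_distrib]; simp [hS]
    rw [hst]
    refine Finset.dvd_sum fun r _ => ?_
    have := (sub_dvd_pow_sub_pow u 1 r)
    simp only [one_pow] at this
    exact h1.trans this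
  have hndvd : ¬ (p : ℤ) ∣ S := by
    intro hdvd
    have : (p : ℤ) ∣ (t : ℤ) := by
      have := dvd_sub hdvd hmod
      simpa using this
    have : p ∣ t := Int.ofNat_dvd.mp this
    exact hp.one_lt.ne' (Nat.Coprime.eq_one_of_dvd ht.symm this)
  have hcop : IsCoprime ((p : ℤ) ^ n) S :=
    (((Nat.prime_iff_prime_int.mp hp).coprime_iff_not_dvd).mpr hndvd).pow_left
  exact hcop.dvd_of_dvd_mul_left (hgeom ▸ h2)

variable {D : Type*} [Group D]

lemma exists_exponent [IsCyclic D] (f : MulAut D) : ∃ u : ℤ, ∀ y : D, f y = y ^ u := by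
  obtain ⟨x, hx⟩ := IsCyclic.exists_generator (α := D)
  obtain ⟨u, hu⟩ := Subgroup.mem_zpowers_iff.mp (hx (f x))
  refine ⟨u, fun y => ?_⟩
  obtain ⟨t, ht⟩ := Subgroup.mem_zpowers_iff.mp (hx y)
  subst ht
  rw [map_zpow, ← hu, ← zpow_mul, mul_comm, zpow_mul]

lemma pow_apply_exponent (f : MulAut D) (u : ℤ) (hu : ∀ y : D, f y = y ^ u) :
    ∀ (m : ℕ) (y : D), (f ^ m) y = y ^ (u ^ m) := by
  intro m
  induction m with
  | zero => simp
  | succ m ih =>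
    intro y
    rw [pow_succ, MulAut.mul_apply, hu y, ih, ← zpow_mul, ← pow_succ']

/-- Key lemma: a `p'`-automorphism `f` with `f d * d⁻¹ ∈ D_l` is trivial, or `d ∈ D_l`. -/
lemma key_lemma [IsCyclic D] [Fintype D] {p n : ℕ} (hp : p.Prime) (hD : Fintype.card D = p ^ n)
    (f : MulAut D) (hf : Nat.Coprime (orderOf f) p) (l : ℕ) (d : D)
    (hdl : (f d * d⁻¹) ^ (p ^ l) = 1) : f = 1 ∨ d ^ (p ^ l) = 1 := by
  obtain ⟨u, hu⟩ := exists_exponent f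
  by_cases h1 : (p : ℤ) ∣ u - 1
  · left
    -- show p^n ∣ u - 1, hence f = 1
    obtain ⟨x, hx⟩ := IsCyclic.exists_generator (α := D)
    have hord : orderOf x = p ^ n := by
      rw [orderOf_eq_card_of_forall_mem_zpowers hx, Nat.card_eq_fintype_card, hD]
    have hft : f ^ orderOf f = 1 := pow_orderOf_eq_one f
    have hxut : x ^ (u ^ orderOf f) = x := by
      rw [← pow_apply_exponent f u hu (orderOf f) x, hft]; rfl
    have h2 : (p : ℤ) ^ n ∣ u ^ orderOf f - 1 := by
      have hxx : x ^ (u ^ orderOf f - 1) = 1 := by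
        rw [zpow_sub, hxut, zpow_one, mul_inv_cancel]
      have h2' : (orderOf x : ℤ) ∣ u ^ orderOf f - 1 := orderOf_dvd_iff_zpow_eq_one.mpr hxx
      rw [hord] at h2'
      exact_mod_cast h2'
    have h3 : (p : ℤ) ^ n ∣ u - 1 := nt_aux p (orderOf f) n hp hf u h1 h2
    ext y
    have hy1 : y ^ (u - 1) = 1 := by
      have : (orderOf y : ℤ) ∣ u - 1 := by
        refine dvd_trans ?_ h3
        have : orderOf y ∣ p ^ n := hD ▸ orderOf_dvd_card
        exact_mod_cast Int.natCast_dvd_natCast.mpr this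
      exact orderOf_dvd_iff_zpow_eq_one.mp this
    have : f y = y := by
      rw [hu y, ← sub_add_cancel u 1, zpow_add, hy1, one_mul, zpow_one]
    simpa using this
  · right
    have hdu : d ^ ((u - 1) * (p ^ l : ℕ)) = 1 := by
      have : f d * d⁻¹ = d ^ (u - 1) := by rw [hu d, zpow_sub, zpow_one]
      rw [this, ← zpow_natCast, ← zpow_mul] at hdl
      exact_mod_cast hdl
    have hdvd : (orderOf d : ℤ) ∣ (u - 1) * (p ^ l : ℕ) := orderOf_dvd_iff_zpow_eq_one.mpr hdu
    obtain ⟨m, hm, hordd⟩ := (Nat.dvd_prime_pow hp).mp (hD ▸ orderOf_dvd_card (x := d))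
    have hcop : IsCoprime ((p : ℤ) ^ m) (u - 1) :=
      (((Nat.prime_iff_prime_int.mp hp).coprime_iff_not_dvd).mpr h1).pow_left
    have : ((p : ℤ) ^ m) ∣ (p ^ l : ℕ) := by
      refine hcop.dvd_of_dvd_mul_left ?_
      exact_mod_cast (hordd ▸ hdvd)
    have hnat : p ^ m ∣ p ^ l := by exact_mod_cast this
    have : orderOf d ∣ p ^ l := hordd ▸ hnat
    exact orderOf_dvd_iff_pow_eq_one.mp this

/-- In a cyclic group of order `p^n`, a subgroup of order `p^m` is `{y | y ^ p^m = 1}`. -/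
lemma subgroup_char [IsCyclic D] [Fintype D] {p n m : ℕ} (hp : p.Prime)
    (hD : Fintype.card D = p ^ n) (H : Subgroup D) (hH : Nat.card H = p ^ m) :
    ∀ y : D, y ∈ H ↔ y ^ (p ^ m) = 1 := by
  classical
  have hpow : ∀ y ∈ H, y ^ (p ^ m) = 1 := by
    intro y hy
    have h1 : (⟨y, hy⟩ : H) ^ (p ^ m) = 1 := by rw [← hH]; exact pow_card_eq_one'
    have := congrArg (Subtype.val) h1
    simpa using this
  have hle := IsCyclic.card_pow_eq_one_le (α := D) (n := p ^ m) (pow_pos hp.pos m)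
  have hsub : (H : Set D).toFinset ⊆ Finset.univ.filter (fun y : D => y ^ (p ^ m) = 1) := by
    intro y hy
    simp only [Set.mem_toFinset, SetLike.mem_coe] at hy
    simp [hpow y hy]
  have hcard : (Finset.univ.filter (fun y : D => y ^ (p ^ m) = 1)).card ≤
      (H : Set D).toFinset.card := by
    rw [Set.toFinset_card]
    calc (Finset.univ.filter (fun y : D => y ^ (p ^ m) = 1)).card ≤ p ^ m := hle
    _ = Nat.card H := hH.symm
    _ = Fintype.card (H : Set D) := by rw [Nat.card_eq_fintype_card]; rfl
  have heq := Finset.eq_of_subset_of_card_le hsub hcard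
  intro y
  constructor
  · exact hpow y
  · intro hy
    have : y ∈ (H : Set D).toFinset := by
      rw [heq]; simp [hy]
    simpa using this

variable (E : Subgroup (MulAut D))

/-- The subgroup `H ⋊ E` of `D ⋊ E`, for `H` stable under all automorphisms. -/
def fullsub (H : Subgroup D) (hstab : ∀ (e : MulAut D), ∀ y ∈ H, e y ∈ H) :
    Subgroup (D ⋊[E.subtype] E) where
  carrier := {x | x.left ∈ H}
  one_mem' := by simp [H.one_mem]
  mul_mem' := by
    intro a b ha hb
    simp only [Set.mem_setOf_eq, mul_left] at *
    exact H.mul_mem ha (hstab _ _ hb)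
  inv_mem' := by
    intro a ha
    simp only [Set.mem_setOf_eq, inv_left] at *
    exact hstab _ _ (H.inv_mem ha)

lemma mem_fullsub {H : Subgroup D} {hstab : ∀ (e : MulAut D), ∀ y ∈ H, e y ∈ H}
    {x : D ⋊[E.subtype] E} : x ∈ fullsub E H hstab ↔ x.left ∈ H := Iff.rfl

lemma join_eq_fullsub (H : Subgroup D) (hstab : ∀ (e : MulAut D), ∀ y ∈ H, e y ∈ H) :
    H.map (inl : D →* D ⋊[E.subtype] E) ⊔
      (inr : E →* D ⋊[E.subtype] E).range = fullsub E H hstab := by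
  apply le_antisymm
  · apply sup_le
    · rintro x ⟨y, hy, rfl⟩
      simpa [mem_fullsub] using hy
    · rintro x ⟨e, rfl⟩
      simp [mem_fullsub, H.one_mem]
  · intro x hx
    rw [← inl_left_mul_inr_right x]
    exact Subgroup.mul_mem _
      (Subgroup.mem_sup_left ⟨x.left, hx, rfl⟩)
      (Subgroup.mem_sup_right ⟨x.right, rfl⟩)

/-- `fullsub E H` is in bijection with `H × E`. -/
noncomputable def fullsubEquiv (H : Subgroup D) (hstab : ∀ (e : MulAut D), ∀ y ∈ H, e y ∈ H) :
    (fullsub E H hstab) ≃ H × E where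
  toFun x := (⟨x.1.left, x.2⟩, x.1.right)
  invFun y := ⟨⟨(y.1 : D), y.2⟩, y.1.2⟩
  left_inv x := by ext <;> rfl
  right_inv y := by ext <;> rfl

lemma card_fullsub (H : Subgroup D) (hstab : ∀ (e : MulAut D), ∀ y ∈ H, e y ∈ H) :
    Nat.card (fullsub E H hstab) = Nat.card H * Nat.card E := by
  rw [Nat.card_congr (fullsubEquiv E H hstab), Nat.card_prod]

/-- `D ⋊ E` is in bijection with `D × E`. -/
def sdpEquiv : (D ⋊[E.subtype] E) ≃ D × E where
  toFun x := (x.left, x.right)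
  invFun y := ⟨y.1, y.2⟩
  left_inv x := rfl
  right_inv y := rfl

lemma card_sdp : Nat.card (D ⋊[E.subtype] E) = Nat.card D * Nat.card E := by
  rw [Nat.card_congr (sdpEquiv E), Nat.card_prod]

end aux

/-- Let `p` be prime, `D` cyclic of order `p^n`, `E ≤ Aut(D)` a
`p'`-subgroup, `G = D ⋊ E`, and `D_i, D_j ≤ D` of orders `p^i, p^j` with
`(i,j) ≠ (0,0)`; set `k = min i j`, `l = max i j`.  If `g ∉ D_l·E` then
`D_iE ∩ ^g(D_jE) = D_k`; moreover `|D_iE·g·D_jE| = p^l·|E|²` and the number of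
nontrivial `(D_iE, D_jE)`-double cosets equals `(p^{n−l} − 1)/|E|`. -/
theorem stmt13 (p n : ℕ) (hp : p.Prime)
    (D : Type*) [Group D] [IsCyclic D] [Fintype D] (hD : Fintype.card D = p ^ n)
    (E : Subgroup (MulAut D)) (hE : Nat.Coprime (Nat.card E) p)
    (i j : ℕ) (hin : i ≤ n) (hjn : j ≤ n) (hij : ¬(i = 0 ∧ j = 0))
    (Di Dj Dk Dl : Subgroup D)
    (hDi : Nat.card Di = p ^ i) (hDj : Nat.card Dj = p ^ j)
    (hDk : Nat.card Dk = p ^ min i j) (hDl : Nat.card Dl = p ^ max i j)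
    (DiE DjE DlE : Subgroup (D ⋊[E.subtype] E))
    (hDiE : DiE = Di.map SemidirectProduct.inl ⊔
      (SemidirectProduct.inr : E →* D ⋊[E.subtype] E).range)
    (hDjE : DjE = Dj.map SemidirectProduct.inl ⊔
      (SemidirectProduct.inr : E →* D ⋊[E.subtype] E).range)
    (hDlE : DlE = Dl.map SemidirectProduct.inl ⊔
      (SemidirectProduct.inr : E →* D ⋊[E.subtype] E).range) :
    (∀ g : D ⋊[E.subtype] E, g ∉ DlE →
      (DiE ⊓ DjE.map (MulAut.conj g).toMonoidHom = Dk.map SemidirectProduct.inl) ∧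
      Nat.card (DoubleCoset.doubleCoset g (DiE : Set (D ⋊[E.subtype] E)) (DjE : Set (D ⋊[E.subtype] E)))
        = p ^ max i j * (Nat.card E) ^ 2) ∧
    Nat.card (DoubleCoset.Quotient (DiE : Set (D ⋊[E.subtype] E)) (DjE : Set (D ⋊[E.subtype] E)))
        - 1 = (p ^ (n - max i j) - 1) / Nat.card E := by
  classical
  letI : CommGroup D := IsCyclic.commGroup
  -- characterizations
  have chi : ∀ y : D, y ∈ Di ↔ y ^ (p ^ i) = 1 := subgroup_char hp hD Di hDi
  have chj : ∀ y : D, y ∈ Dj ↔ y ^ (p ^ j) = 1 := subgroup_char hp hD Dj hDj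
  have chk : ∀ y : D, y ∈ Dk ↔ y ^ (p ^ min i j) = 1 := subgroup_char hp hD Dk hDk
  have chl : ∀ y : D, y ∈ Dl ↔ y ^ (p ^ max i j) = 1 := subgroup_char hp hD Dl hDl
  have hmono : ∀ a b : ℕ, a ≤ b → ∀ y : D, y ^ (p ^ a) = 1 → y ^ (p ^ b) = 1 := by
    intro a b hab y hy
    have : p ^ b = p ^ a * p ^ (b - a) := by rw [← pow_add, Nat.add_sub_cancel' hab]
    rw [this, pow_mul, hy, one_pow]
  have hDiDl : ∀ y ∈ Di, y ∈ Dl := fun y hy =>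
    (chl y).mpr (hmono i _ (le_max_left i j) y ((chi y).mp hy))
  have hDjDl : ∀ y ∈ Dj, y ∈ Dl := fun y hy =>
    (chl y).mpr (hmono j _ (le_max_right i j) y ((chj y).mp hy))
  have hDkDi : ∀ y ∈ Dk, y ∈ Di := fun y hy =>
    (chi y).mpr (hmono _ i (min_le_left i j) y ((chk y).mp hy))
  have hDkDj : ∀ y ∈ Dk, y ∈ Dj := fun y hy =>
    (chj y).mpr (hmono _ j (min_le_right i j) y ((chk y).mp hy))
  have hkmem : ∀ y : D, y ∈ Di → y ∈ Dj → y ∈ Dk := by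
    intro y h1 h2
    rcases le_total i j with h | h
    · exact (chk y).mpr (by rw [min_eq_left h]; exact (chi y).mp h1)
    · exact (chk y).mpr (by rw [min_eq_right h]; exact (chj y).mp h2)
  have hdecomp : ∀ z ∈ Dl, ∃ a ∈ Di, ∃ b ∈ Dj, a * b = z := by
    intro z hz
    rcases le_total i j with h | h
    · exact ⟨1, Di.one_mem, z,
        (chj z).mpr (by rw [← max_eq_right h]; exact (chl z).mp hz), one_mul z⟩
    · exact ⟨z, (chi z).mpr (by rw [← max_eq_left h]; exact (chl z).mp hz), 1,
        Dj.one_mem, mul_one z⟩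
  have hstabi : ∀ (e : MulAut D), ∀ y ∈ Di, e y ∈ Di := by
    intro e y hy
    exact (chi _).mpr (by rw [← map_pow, (chi y).mp hy, map_one])
  have hstabj : ∀ (e : MulAut D), ∀ y ∈ Dj, e y ∈ Dj := by
    intro e y hy
    exact (chj _).mpr (by rw [← map_pow, (chj y).mp hy, map_one])
  have hstabl : ∀ (e : MulAut D), ∀ y ∈ Dl, e y ∈ Dl := by
    intro e y hy
    exact (chl _).mpr (by rw [← map_pow, (chl y).mp hy, map_one])
  have hstabj' : ∀ (e : MulAut D) (y : D), e y ∈ Dj ↔ y ∈ Dj := fun e y =>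
    ⟨fun h => by simpa using hstabj e⁻¹ _ h, fun h => hstabj e y h⟩
  rw [join_eq_fullsub E Di hstabi] at hDiE
  rw [join_eq_fullsub E Dj hstabj] at hDjE
  rw [join_eq_fullsub E Dl hstabl] at hDlE
  subst hDiE hDjE hDlE
  -- the key lemma, specialized
  have KL' : ∀ (e : E) (d : D), ((e : MulAut D)) d * d⁻¹ ∈ Dl → d ∉ Dl →
      (e : MulAut D) = 1 := by
    intro e d h1 h2
    have hcop : Nat.Coprime (orderOf ((e : MulAut D))) p := by
      have h3 : orderOf ((e : MulAut D)) = orderOf e :=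
        orderOf_injective E.subtype Subtype.coe_injective e
      rw [h3]
      exact Nat.Coprime.coprime_dvd_left (orderOf_dvd_natCard e) hE
    rcases key_lemma hp hD _ hcop (max i j) d ((chl _).mp h1) with h | h
    · exact h
    · exact absurd ((chl d).mpr h) h2
  -- membership in the conjugated subgroup
  have memmap : ∀ (g x : D ⋊[E.subtype] E),
      x ∈ (fullsub E Dj hstabj).map (MulAut.conj g).toMonoidHom ↔
        g⁻¹ * x * g ∈ fullsub E Dj hstabj := by
    intro g x
    constructor
    · rintro ⟨y, hy, rfl⟩
      simpa [MulAut.conj_apply, mul_assoc] using hy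
    · intro h
      exact ⟨g⁻¹ * x * g, h, by
        simp only [MulEquiv.coe_toMonoidHom, MulAut.conj_apply]; group⟩
  have hconjleft : ∀ (g x : D ⋊[E.subtype] E), (g⁻¹ * x * g).left =
      (E.subtype g.right⁻¹) (g.left⁻¹ * x.left * (E.subtype x.right g.left)) := by
    intro g x
    simp [mul_left, inv_left, map_mul, mul_assoc]
  have part1a : ∀ g : D ⋊[E.subtype] E, g.left ∉ Dl →
      (fullsub E Di hstabi) ⊓ (fullsub E Dj hstabj).map (MulAut.conj g).toMonoidHom
        = Dk.map (inl : D →* D ⋊[E.subtype] E) := by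
    intro g hg
    ext x
    rw [Subgroup.mem_inf, memmap, mem_fullsub, mem_fullsub, hconjleft]
    have hrw : g.left⁻¹ * x.left * (E.subtype x.right g.left)
        = x.left * ((E.subtype x.right) g.left * g.left⁻¹) := by
      rw [mul_comm (g.left⁻¹) x.left, mul_assoc, mul_comm ((E.subtype x.right) g.left) g.left⁻¹]
    rw [hrw]
    constructor
    · rintro ⟨hxi, hxj⟩
      have hxj' : x.left * ((E.subtype x.right) g.left * g.left⁻¹) ∈ Dj := by
        rwa [hstabj'] at hxj
      have hcl : (E.subtype x.right) g.left * g.left⁻¹ ∈ Dl := by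
        have h1 : x.left⁻¹ * (x.left * ((E.subtype x.right) g.left * g.left⁻¹)) ∈ Dl :=
          Dl.mul_mem (Dl.inv_mem (hDiDl _ hxi)) (hDjDl _ hxj')
        simpa [inv_mul_cancel_left] using h1
      have he1 : (x.right : MulAut D) = 1 := KL' x.right g.left hcl hg
      have hc1 : (E.subtype x.right) g.left * g.left⁻¹ = 1 := by
        show ((x.right : MulAut D)) g.left * g.left⁻¹ = 1
        rw [he1]; simp
      have hxj'' : x.left ∈ Dj := by rwa [hc1, mul_one] at hxj'
      have hx1 : x.right = 1 := by
        ext1; exact he1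
      have hxeq : x = inl x.left := by
        conv_lhs => rw [← inl_left_mul_inr_right x]
        rw [hx1]; simp
      exact ⟨x.left, hkmem _ hxi hxj'', hxeq.symm⟩
    · rintro ⟨m, hm, rfl⟩
      refine ⟨by simpa using hDkDi _ hm, ?_⟩
      rw [hstabj']
      simpa using hDkDj _ hm
  -- characterization of double cosets
  have doset_char : ∀ (g x : D ⋊[E.subtype] E),
      x ∈ DoubleCoset.doubleCoset g ((fullsub E Di hstabi : Subgroup (D ⋊[E.subtype] E)) :
          Set (D ⋊[E.subtype] E)) ((fullsub E Dj hstabj : Subgroup (D ⋊[E.subtype] E)) :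
          Set (D ⋊[E.subtype] E)) ↔
        ∃ e : E, ((E.subtype e) g.left)⁻¹ * x.left ∈ Dl := by
    intro g x
    rw [DoubleCoset.mem_doubleCoset]
    constructor
    · rintro ⟨h, hh, k, hk, rfl⟩
      have hh' : h.left ∈ Di := hh
      have hk' : k.left ∈ Dj := hk
      refine ⟨h.right, ?_⟩
      have hexp : (h * g * k).left
          = h.left * (E.subtype h.right) g.left * (E.subtype (h.right * g.right)) k.left := rfl
      rw [hexp]
      have hcalc : ((E.subtype h.right) g.left)⁻¹ *
          (h.left * (E.subtype h.right) g.left * (E.subtype (h.right * g.right)) k.left)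
          = h.left * (E.subtype (h.right * g.right)) k.left := by
        simp [mul_comm, mul_left_comm, mul_assoc]
      rw [hcalc]
      exact Dl.mul_mem (hDiDl _ hh') (hDjDl _ (hstabj _ _ hk'))
    · rintro ⟨e, he⟩
      obtain ⟨a, ha, b, hb, hab⟩ := hdecomp _ he
      refine ⟨inl a * inr e, ?_, ((inl a * inr e) * g)⁻¹ * x, ?_, by group⟩
      · show (inl a * inr e : D ⋊[E.subtype] E).left ∈ Di
        simpa using ha
      · show (((inl a * inr e) * g)⁻¹ * x).left ∈ Dj
        have hin : (((inl a * inr e) * g)⁻¹ * x).left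
            = (E.subtype ((e * g.right))⁻¹) ((a * (E.subtype e) g.left)⁻¹ * x.left) := by
          simp only [SemidirectProduct.mul_left, SemidirectProduct.mul_right,
            SemidirectProduct.inv_left, SemidirectProduct.inv_right, left_inl, right_inl,
            left_inr, right_inr, map_mul, map_inv, map_one, one_mul, mul_one]
        rw [hin]
        apply hstabj
        have hx : x.left = (E.subtype e) g.left * (a * b) := by
          rw [hab, mul_inv_cancel_left]
        have hfin : (a * (E.subtype e) g.left)⁻¹ * x.left = b := by
          rw [hx]
          simp [mul_comm, mul_left_comm, mul_assoc]
        rw [hfin]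
        exact hb
  have doset_triv : ∀ g1 : D ⋊[E.subtype] E, g1.left ∈ Dl →
      DoubleCoset.doubleCoset g1 ((fullsub E Di hstabi : Subgroup (D ⋊[E.subtype] E)) : Set (D ⋊[E.subtype] E))
          ((fullsub E Dj hstabj : Subgroup (D ⋊[E.subtype] E)) : Set (D ⋊[E.subtype] E))
        = ((fullsub E Dl hstabl : Subgroup (D ⋊[E.subtype] E)) : Set (D ⋊[E.subtype] E)) := by
    intro g1 hg1
    ext x
    rw [doset_char]
    constructor
    · rintro ⟨e, he⟩
      show x.left ∈ Dl
      have hh := Dl.mul_mem (hstabl (E.subtype e) _ hg1) he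
      rwa [mul_inv_cancel_left] at hh
    · intro hx
      refine ⟨1, ?_⟩
      simp only [map_one, MulAut.one_apply]
      exact Dl.mul_mem (Dl.inv_mem hg1) hx
  have doset_card : ∀ g : D ⋊[E.subtype] E, g.left ∉ Dl →
      Nat.card (DoubleCoset.doubleCoset g
        ((fullsub E Di hstabi : Subgroup (D ⋊[E.subtype] E)) : Set (D ⋊[E.subtype] E))
        ((fullsub E Dj hstabj : Subgroup (D ⋊[E.subtype] E)) : Set (D ⋊[E.subtype] E)))
        = p ^ max i j * Nat.card E ^ 2 := by
    intro g hg
    have hmapmem : ∀ (y : (E × Dl) × E),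
        (⟨(E.subtype y.1.1) g.left * (y.1.2 : D), y.2⟩ : D ⋊[E.subtype] E) ∈ DoubleCoset.doubleCoset g
          ((fullsub E Di hstabi : Subgroup (D ⋊[E.subtype] E)) : Set (D ⋊[E.subtype] E))
          ((fullsub E Dj hstabj : Subgroup (D ⋊[E.subtype] E)) : Set (D ⋊[E.subtype] E)) := by
      intro y
      rw [doset_char]
      refine ⟨y.1.1, ?_⟩
      show ((E.subtype y.1.1) g.left)⁻¹ * ((E.subtype y.1.1) g.left * (y.1.2 : D)) ∈ Dl
      rw [inv_mul_cancel_left]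
      exact y.1.2.2
    let F : (E × Dl) × E → (DoubleCoset.doubleCoset g
        ((fullsub E Di hstabi : Subgroup (D ⋊[E.subtype] E)) : Set (D ⋊[E.subtype] E))
        ((fullsub E Dj hstabj : Subgroup (D ⋊[E.subtype] E)) : Set (D ⋊[E.subtype] E))) :=
      fun y => ⟨⟨(E.subtype y.1.1) g.left * (y.1.2 : D), y.2⟩, hmapmem y⟩
    have hinj : Function.Injective F := by
      intro y1 y2 hF
      have hval := congrArg Subtype.val hF
      have hleft : (E.subtype y1.1.1) g.left * (y1.1.2 : D)
          = (E.subtype y2.1.1) g.left * (y2.1.2 : D) :=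
        congrArg SemidirectProduct.left hval
      have hright : y1.2 = y2.2 := congrArg SemidirectProduct.right hval
      have hdd : (E.subtype y1.1.1) g.left * ((E.subtype y2.1.1) g.left)⁻¹
          = (y2.1.2 : D) * (y1.1.2 : D)⁻¹ := by
        have h0 : (E.subtype y1.1.1) g.left
            = (E.subtype y2.1.1) g.left * (y2.1.2 : D) * (y1.1.2 : D)⁻¹ := by
          rw [← hleft, mul_inv_cancel_right]
        rw [h0]
        simp [mul_comm, mul_left_comm, mul_assoc]
      have hcl : (E.subtype (y2.1.1⁻¹ * y1.1.1)) g.left * g.left⁻¹ ∈ Dl := by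
        have heq2 : (E.subtype (y2.1.1⁻¹ * y1.1.1)) g.left * g.left⁻¹
            = (E.subtype y2.1.1⁻¹) ((E.subtype y1.1.1) g.left * ((E.subtype y2.1.1) g.left)⁻¹) := by
          simp only [map_mul, map_inv, MulAut.mul_apply, MulAut.inv_def,
            MulEquiv.symm_apply_apply]
        rw [heq2, hdd]
        exact hstabl _ _ (Dl.mul_mem y2.1.2.2 (Dl.inv_mem y1.1.2.2))
      have h2 : y2.1.1⁻¹ * y1.1.1 = 1 := Subtype.ext
        (by simpa using KL' (y2.1.1⁻¹ * y1.1.1) g.left hcl hg)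
      have he1 : y1.1.1 = y2.1.1 := (inv_mul_eq_one.mp h2).symm
      have hz : y1.1.2 = y2.1.2 := by
        apply Subtype.ext
        have h3 := hleft
        rw [he1] at h3
        exact mul_left_cancel h3
      exact Prod.ext (Prod.ext he1 hz) hright
    have hsurj : Function.Surjective F := by
      rintro ⟨x, hx⟩
      rw [doset_char] at hx
      obtain ⟨e, he⟩ := hx
      refine ⟨((e, ⟨((E.subtype e) g.left)⁻¹ * x.left, he⟩), x.right), ?_⟩
      apply Subtype.ext
      show (⟨(E.subtype e) g.left * (((E.subtype e) g.left)⁻¹ * x.left), x.right⟩ :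
        D ⋊[E.subtype] E) = x
      rw [mul_inv_cancel_left]
    rw [Nat.card_congr (Equiv.ofBijective F ⟨hinj, hsurj⟩).symm, Nat.card_prod, Nat.card_prod,
      hDl]
    ring
  refine ⟨fun g hgmem => ⟨part1a g (fun hl => hgmem hl), doset_card g (fun hl => hgmem hl)⟩, ?_⟩
  -- counting the double cosets
  have hfinAut : Finite (MulAut D) :=
    Finite.of_injective (fun f : MulAut D => (f : D → D)) (fun a b hab => by
      ext x; exact congrFun hab x)
  have hfinG : Finite (D ⋊[E.subtype] E) :=
    Finite.of_injective (fun x : D ⋊[E.subtype] E => (x.left, x.right))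
      (fun a b hab => by
        rw [Prod.ext_iff] at hab
        exact SemidirectProduct.ext hab.1 hab.2)
  letI : Fintype (D ⋊[E.subtype] E) := Fintype.ofFinite _
  letI : Finite (DoubleCoset.Quotient
      ((fullsub E Di hstabi : Subgroup (D ⋊[E.subtype] E)) : Set (D ⋊[E.subtype] E))
      ((fullsub E Dj hstabj : Subgroup (D ⋊[E.subtype] E)) : Set (D ⋊[E.subtype] E))) :=
    Quotient.finite _
  letI : Fintype (DoubleCoset.Quotient
      ((fullsub E Di hstabi : Subgroup (D ⋊[E.subtype] E)) : Set (D ⋊[E.subtype] E))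
      ((fullsub E Dj hstabj : Subgroup (D ⋊[E.subtype] E)) : Set (D ⋊[E.subtype] E))) :=
    Fintype.ofFinite _
  set Hi := fullsub E Di hstabi with hHi
  set Hj := fullsub E Dj hstabj with hHj
  set Hl := fullsub E Dl hstabl with hHl
  have hsum : Fintype.card (D ⋊[E.subtype] E) =
      ∑ q : DoubleCoset.Quotient (Hi : Set (D ⋊[E.subtype] E)) (Hj : Set (D ⋊[E.subtype] E)),
        Fintype.card {x : D ⋊[E.subtype] E // DoubleCoset.mk Hi Hj x = q} := by
    have hcongr := Fintype.card_congr
      (Equiv.sigmaFiberEquiv (fun x : D ⋊[E.subtype] E => DoubleCoset.mk Hi Hj x))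
    rw [Fintype.card_sigma] at hcongr
    exact hcongr.symm
  have fibeq : ∀ q : DoubleCoset.Quotient (Hi : Set (D ⋊[E.subtype] E)) (Hj : Set (D ⋊[E.subtype] E)),
      Fintype.card {x : D ⋊[E.subtype] E // DoubleCoset.mk Hi Hj x = q}
        = Nat.card (DoubleCoset.doubleCoset (Quotient.out q) (Hi : Set (D ⋊[E.subtype] E))
            (Hj : Set (D ⋊[E.subtype] E))) := by
    intro q
    rw [← Nat.card_eq_fintype_card]
    apply Nat.card_congr
    apply Equiv.subtypeEquivRight
    intro x
    constructor
    · intro hq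
      have h1 : DoubleCoset.mk Hi Hj (Quotient.out q) = DoubleCoset.mk Hi Hj x := by
        rw [DoubleCoset.out_eq']
        exact hq.symm
      exact DoubleCoset.mem_doubleCoset.mpr ((DoubleCoset.eq Hi Hj _ _).mp h1)
    · intro hx
      have h1 : DoubleCoset.mk Hi Hj (Quotient.out q) = DoubleCoset.mk Hi Hj x :=
        (DoubleCoset.eq Hi Hj _ _).mpr (DoubleCoset.mem_doubleCoset.mp hx)
      rw [← h1, DoubleCoset.out_eq']
  -- the trivial class
  have h1l : (1 : D ⋊[E.subtype] E).left ∈ Dl := Dl.one_mem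
  have hq0out : (Quotient.out (DoubleCoset.mk Hi Hj (1 : D ⋊[E.subtype] E))).left ∈ Dl := by
    have h1 : DoubleCoset.mk Hi Hj (Quotient.out (DoubleCoset.mk Hi Hj (1 : D ⋊[E.subtype] E)))
        = DoubleCoset.mk Hi Hj (1 : D ⋊[E.subtype] E) := DoubleCoset.out_eq' _ _ _
    have h2 := (DoubleCoset.eq Hi Hj _ _).mp h1.symm
    have h3 : Quotient.out (DoubleCoset.mk Hi Hj (1 : D ⋊[E.subtype] E)) ∈
        DoubleCoset.doubleCoset (1 : D ⋊[E.subtype] E) (Hi : Set (D ⋊[E.subtype] E)) (Hj : Set _) :=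
      DoubleCoset.mem_doubleCoset.mpr h2
    rw [doset_triv 1 h1l] at h3
    exact h3
  have hcard0 : Nat.card (DoubleCoset.doubleCoset
      (Quotient.out (DoubleCoset.mk Hi Hj (1 : D ⋊[E.subtype] E)))
      (Hi : Set (D ⋊[E.subtype] E)) (Hj : Set (D ⋊[E.subtype] E)))
      = p ^ max i j * Nat.card E := by
    rw [doset_triv _ hq0out]
    have hcoe : Nat.card ((Hl : Subgroup (D ⋊[E.subtype] E)) : Set (D ⋊[E.subtype] E))
        = Nat.card Hl := rfl
    rw [hcoe, hHl, card_fullsub, hDl]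
  have hcardq : ∀ q, q ≠ DoubleCoset.mk Hi Hj (1 : D ⋊[E.subtype] E) →
      Nat.card (DoubleCoset.doubleCoset (Quotient.out q) (Hi : Set (D ⋊[E.subtype] E))
        (Hj : Set (D ⋊[E.subtype] E))) = p ^ max i j * Nat.card E ^ 2 := by
    intro q hq
    apply doset_card
    intro hl
    apply hq
    have h4 : DoubleCoset.doubleCoset (Quotient.out q) (Hi : Set (D ⋊[E.subtype] E))
        (Hj : Set (D ⋊[E.subtype] E)) = DoubleCoset.doubleCoset (1 : D ⋊[E.subtype] E)
        (Hi : Set (D ⋊[E.subtype] E)) (Hj : Set (D ⋊[E.subtype] E)) := by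
      rw [doset_triv _ hl, doset_triv 1 h1l]
    have h5 := DoubleCoset.mk_eq_of_doubleCoset_eq h4
    rw [DoubleCoset.out_eq'] at h5
    exact h5
  -- assemble the sum
  set N := Fintype.card (DoubleCoset.Quotient (Hi : Set (D ⋊[E.subtype] E))
    (Hj : Set (D ⋊[E.subtype] E))) with hN
  have htotal : Fintype.card (D ⋊[E.subtype] E)
      = p ^ max i j * Nat.card E + (N - 1) * (p ^ max i j * Nat.card E ^ 2) := by
    rw [hsum, ← Finset.add_sum_erase _ _
      (Finset.mem_univ (DoubleCoset.mk Hi Hj (1 : D ⋊[E.subtype] E)))]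
    congr 1
    · rw [fibeq, hcard0]
    · rw [Finset.sum_congr rfl (fun q hq => by
        rw [fibeq, hcardq q (Finset.mem_erase.mp hq).1])]
      rw [Finset.sum_const, smul_eq_mul, Finset.card_erase_of_mem (Finset.mem_univ _),
        Finset.card_univ]
  have hGcard : Fintype.card (D ⋊[E.subtype] E) = p ^ n * Nat.card E := by
    rw [← Nat.card_eq_fintype_card, card_sdp, Nat.card_eq_fintype_card, hD]
  have hEpos : 0 < Nat.card E := Nat.card_pos
  have hlen : max i j ≤ n := max_le hin hjn
  have hppos : 0 < p ^ max i j * Nat.card E :=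
    Nat.mul_pos (pow_pos hp.pos _) hEpos
  have hkey : p ^ (n - max i j) * (p ^ max i j * Nat.card E)
      = (1 + (N - 1) * Nat.card E) * (p ^ max i j * Nat.card E) := by
    have hpn : p ^ (n - max i j) * p ^ max i j = p ^ n := by
      rw [← pow_add, Nat.sub_add_cancel hlen]
    calc p ^ (n - max i j) * (p ^ max i j * Nat.card E)
        = p ^ n * Nat.card E := by rw [← mul_assoc, hpn]
      _ = p ^ max i j * Nat.card E + (N - 1) * (p ^ max i j * Nat.card E ^ 2) := by
          rw [← hGcard, htotal]
      _ = (1 + (N - 1) * Nat.card E) * (p ^ max i j * Nat.card E) := by ring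
  have hkey2 : p ^ (n - max i j) = 1 + (N - 1) * Nat.card E :=
    Nat.eq_of_mul_eq_mul_right hppos hkey
  have hkey3 : p ^ (n - max i j) - 1 = (N - 1) * Nat.card E := by omega
  rw [Nat.card_eq_fintype_card]
  exact (Nat.div_eq_of_eq_mul_left hEpos hkey3).symm
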